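/- Let ∂ : C₂ → C₁ be a homomorphism of abelian groups, suppose C₂(v) ⊆ C₂ are subgroups for v in a finite set V, and suppose for each v that ∂̄_v(ζ) is a boundary, i.e., ∂̄_v(ζ) = ∂₂(v)(ζ'(v)) for some ζ'(v) ∈ C₂(v). If each H₁ of the vertex complexes vanishes (every cycle in C₁(v) is a boundary), then ζ corresponds to a normal surface if and only if ∂̄_v(ζ) is a cycle for all v, i.e., ∂₁(v)(∂̄_v(ζ)) = 0. -/
import Mathlib


/-- Corollary for manifolds: with vertex-link chain complexes
`C₂(v) → C₁(v) → C₀(v)` satisfying `∂₁(v) ∘ ∂₂(v) = 0` and `H₁(C_*(v)) = 0`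
(every cycle in `C₁(v)` is a boundary), a quadrilateral chain `ζ` corresponds
to a normal surface (there is `ζ' ∈ ⊕_v C₂(v)` with `∂(ζ + ζ') = 0`) iff
`∂̄_v(ζ)` is a cycle for all `v`, i.e. `∂₁(v)(∂̄_v(ζ)) = 0`. -/
theorem quad_extends_iff_projections_are_cycles
    {V : Type*} [Fintype V] [DecidableEq V]
    (Q : Type*) [AddCommGroup Q]
    (T C₁ C₀ : V → Type*) [∀ v, AddCommGroup (T v)] [∀ v, AddCommGroup (C₁ v)]
    [∀ v, AddCommGroup (C₀ v)]
    (d : Q × (Π₀ v, T v) →+ Π₀ v, C₁ v)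
    (d₂ : ∀ v, T v →+ C₁ v) (d₁ : ∀ v, C₁ v →+ C₀ v)
    (hcomplex : ∀ v, (d₁ v).comp (d₂ v) = 0)
    (hrestrict : ∀ (v : V) (t : T v),
      d (0, DFinsupp.single v t) = DFinsupp.single v (d₂ v t))
    (hH₁ : ∀ (v : V) (x : C₁ v), d₁ v x = 0 → x ∈ (d₂ v).range)
    (ζ : Q) :
    (∃ ζ' : Π₀ v, T v, d (ζ, ζ') = 0) ↔
      ∀ v : V, d₁ v (d (ζ, 0) v) = 0 := by
  have hdecomp : ∀ x : Π₀ v, T v, x = ∑ v, DFinsupp.single v (x v) := by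
    intro x; ext w
    rw [DFinsupp.finset_sum_apply, Finset.sum_eq_single w]
    · simp
    · intro b _ hb; simp [DFinsupp.single_apply, hb]
    · simp
  have hd0 : ∀ (x : Π₀ v, T v) (v : V), d (0, x) v = d₂ v (x v) := by
    intro x v
    have hx : ((0 : Q), x) = ∑ w, ((0 : Q), DFinsupp.single w (x w)) := by
      rw [Prod.ext_iff, Prod.fst_sum, Prod.snd_sum]; constructor
      · simp
      · simpa using hdecomp x
    rw [hx, map_sum, DFinsupp.finset_sum_apply, Finset.sum_eq_single v]
    · rw [hrestrict]; simp
    · intro b _ hb; rw [hrestrict]; simp [DFinsupp.single_apply, hb]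
    · simp
  have hsplit : ∀ x : Π₀ v, T v, d (ζ, x) = d (ζ, 0) + d (0, x) := by
    intro x
    rw [← map_add]
    congr 1
    simp
  constructor
  · rintro ⟨ζ', h⟩ v
    have h2 : d (ζ, 0) v = -(d₂ v (ζ' v)) := by
      have h3 := hsplit ζ'
      rw [h] at h3
      have h4 : d (ζ, 0) = -(d (0, ζ')) := by
        rw [eq_neg_iff_add_eq_zero, h3.symm]
      rw [h4]
      simp [hd0]
    rw [h2]
    have := congrFun (congrArg (fun f => f.toFun) (hcomplex v)) (ζ' v)
    simpa using this
  · intro hcyc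
    choose t ht using fun v => hH₁ v (d (ζ, 0) v) (hcyc v)
    refine ⟨-(DFinsupp.mk Finset.univ fun v => t v), ?_⟩
    rw [hsplit]
    ext w
    rw [DFinsupp.add_apply, hd0]
    simp only [DFinsupp.neg_apply, DFinsupp.mk_apply, Finset.mem_univ, dif_pos, map_neg]
    rw [ht w]
    simp
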